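/- Let ζ₁,…,ζ_n be complex numbers with Re ζᵢ > 0 for all i, and t₁ < t₂ < ⋯ < t_n real numbers. Then ∫_{−∞}^{∞} ∏_{i=1}^{n} e^{−ζᵢ|t−tᵢ|} dt = (1/(ζ₁+⋯+ζ_n)) ∏_{i=2}^{n} e^{−ζᵢ(tᵢ−t₁)} + Σ_{j=1}^{n−1} [ ∏_{i=1}^{j−1} e^{−ζᵢ(t_j−tᵢ)} · (t_{j+1}−t_j) · ∏_{i=j+2}^{n} e^{−ζᵢ(tᵢ−t_{j+1})} · ∫₀¹ e^{−[(ζ₁+⋯+ζ_j)s + (ζ_{j+1}+⋯+ζ_n)(1−s)](t_{j+1}−t_j)} ds ] + (1/(ζ₁+⋯+ζ_n)) ∏_{i=1}^{n−1} e^{−ζᵢ(t_n−tᵢ)}. -/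

import Mathlib

open MeasureTheory Set Filter

lemma integrableOn_cexp_Ioi (c : ℂ) (hc : 0 < c.re) (a : ℝ) :
    IntegrableOn (fun s : ℝ => Complex.exp (-(c * s))) (Set.Ioi a) := by
  refine (exp_neg_integrableOn_Ioi a hc).mono' ?_ ?_
  · exact (Complex.continuous_exp.comp (by fun_prop)).aestronglyMeasurable
  · filter_upwards with x
    simp [Complex.norm_exp]

lemma integral_cexp_Ioi (c : ℂ) (hc : 0 < c.re) (a : ℝ) :
    ∫ s in Set.Ioi a, Complex.exp (-(c * s)) = Complex.exp (-(c * a)) / c := by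
  have hc0 : c ≠ 0 := fun h => by simp [h] at hc
  have hderiv : ∀ x ∈ Set.Ici a,
      HasDerivAt (fun s : ℝ => -Complex.exp (-(c * s)) / c) (Complex.exp (-(c * x))) x := by
    intro x _
    have h1 : HasDerivAt (fun z : ℂ => -Complex.exp (-(c * z)) / c)
        (Complex.exp (-(c * (x:ℂ)))) (x:ℂ) := by
      have := (((Complex.hasDerivAt_exp (-(c * (x:ℂ)))).comp (x:ℂ)
        (((hasDerivAt_id (x:ℂ)).const_mul c).neg)).neg.div_const c)
      refine this.congr_deriv ?_
      rw [div_eq_iff hc0]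
      ring
    exact h1.comp_ofReal
  have htend : Tendsto (fun s : ℝ => -Complex.exp (-(c * s)) / c) atTop (nhds 0) := by
    rw [tendsto_zero_iff_norm_tendsto_zero]
    have heq : (fun s : ℝ => ‖-Complex.exp (-(c * s)) / c‖)
        = fun s : ℝ => Real.exp (-(c.re * s)) / ‖c‖ := by
      funext s
      simp [Complex.norm_exp]
    rw [heq]
    have h1 : Tendsto (fun s : ℝ => c.re * s) atTop atTop :=
      Tendsto.const_mul_atTop hc tendsto_id
    have h2 : Tendsto (fun s : ℝ => -(c.re * s)) atTop atBot :=
      tendsto_neg_atBot_iff.mpr h1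
    simpa using (Real.tendsto_exp_atBot.comp h2).div_const ‖c‖
  have h := integral_Ioi_of_hasDerivAt_of_tendsto' hderiv (integrableOn_cexp_Ioi c hc a) htend
  rw [h]
  field_simp
  ring

lemma integrableOn_cexp_Iic (c : ℂ) (hc : 0 < c.re) (a : ℝ) :
    IntegrableOn (fun s : ℝ => Complex.exp (c * s)) (Set.Iic a) := by
  have hmp : MeasurePreserving (fun x : ℝ => -x) volume volume :=
    ⟨measurable_neg, Measure.map_neg_eq_self _⟩
  have hemb : MeasurableEmbedding (fun x : ℝ => -x) :=
    (Homeomorph.neg ℝ).isClosedEmbedding.measurableEmbedding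
  have h := (hmp.integrableOn_comp_preimage hemb
    (f := fun s : ℝ => Complex.exp (-(c * s))) (s := Set.Ioi (-a))).mpr
    (integrableOn_cexp_Ioi c hc (-a))
  have hset : (fun x : ℝ => -x) ⁻¹' Set.Ioi (-a) = Set.Iio a := by
    ext x; simp
  rw [hset] at h
  have hfun : ((fun s : ℝ => Complex.exp (-(c * s))) ∘ fun x : ℝ => -x)
      = fun s : ℝ => Complex.exp (c * s) := by
    funext x; simp only [Function.comp]; congr 1; push_cast; ring
  rw [hfun] at h
  rwa [integrableOn_Iic_iff_integrableOn_Iio]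

lemma integral_cexp_Iic (c : ℂ) (hc : 0 < c.re) (a : ℝ) :
    ∫ s in Set.Iic a, Complex.exp (c * s) = Complex.exp (c * a) / c := by
  have h1 : (fun s : ℝ => Complex.exp (c * s))
      = fun x : ℝ => Complex.exp (-(c * ((-x : ℝ) : ℂ))) := by
    funext x; congr 1; push_cast; ring
  have h2 := integral_comp_neg_Iic a (fun x : ℝ => Complex.exp (-(c * x)))
  rw [h1, h2, integral_cexp_Ioi c hc (-a)]
  congr 2
  push_cast; ring



open Finset

set_option maxHeartbeats 1000000 in
theorem stmt19 (n : ℕ) (hn : 1 ≤ n) (ζ : ℕ → ℂ) (t : ℕ → ℝ)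
    -- Re ζᵢ > 0, for i = 1,…,n
    (hζ : ∀ i ∈ Finset.Icc 1 n, 0 < (ζ i).re)
    -- t₁ < t₂ < ⋯ < t_n
    (ht : ∀ i ∈ Finset.Icc 1 n, ∀ j ∈ Finset.Icc 1 n, i < j → t i < t j) :
    ∫ s : ℝ, ∏ i ∈ Finset.Icc 1 n, Complex.exp (-ζ i * ((|s - t i| : ℝ) : ℂ))
      = (1 / ∑ i ∈ Finset.Icc 1 n, ζ i) *
          ∏ i ∈ Finset.Icc 2 n, Complex.exp (-ζ i * ((t i - t 1 : ℝ) : ℂ))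
        + ∑ j ∈ Finset.Icc 1 (n - 1),
            (∏ i ∈ Finset.Icc 1 (j - 1), Complex.exp (-ζ i * ((t j - t i : ℝ) : ℂ))) *
            ((t (j + 1) - t j : ℝ) : ℂ) *
            (∏ i ∈ Finset.Icc (j + 2) n, Complex.exp (-ζ i * ((t i - t (j + 1) : ℝ) : ℂ))) *
            (∫ s in (0:ℝ)..1, Complex.exp
              (-(((∑ i ∈ Finset.Icc 1 j, ζ i) * (s : ℂ)
                  + (∑ i ∈ Finset.Icc (j + 1) n, ζ i) * (1 - (s : ℂ)))
                * ((t (j + 1) - t j : ℝ) : ℂ))))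
        + (1 / ∑ i ∈ Finset.Icc 1 n, ζ i) *
            ∏ i ∈ Finset.Icc 1 (n - 1), Complex.exp (-ζ i * ((t n - t i : ℝ) : ℂ)) := by
  classical
  set f : ℝ → ℂ := fun s => ∏ i ∈ Finset.Icc 1 n, Complex.exp (-ζ i * ((|s - t i| : ℝ) : ℂ))
    with hf
  have htle : ∀ i ∈ Finset.Icc 1 n, ∀ j ∈ Finset.Icc 1 n, i ≤ j → t i ≤ t j := by
    intro i hi j hj hij
    rcases eq_or_lt_of_le hij with h | h
    · rw [h]
    · exact (ht i hi j hj h).le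
  have h1n : (1:ℕ) ∈ Finset.Icc 1 n := by simp [hn]
  have hnn : n ∈ Finset.Icc 1 n := by simp [hn]
  set Z : ℂ := ∑ i ∈ Finset.Icc 1 n, ζ i with hZdef
  have hZre : 0 < Z.re := by
    rw [hZdef, Complex.re_sum]
    exact Finset.sum_pos hζ ⟨1, h1n⟩
  have hZ0 : Z ≠ 0 := by intro h; rw [h] at hZre; simp at hZre
  have hfc : Continuous f := by
    apply continuous_finset_prod
    intro i _
    exact Complex.continuous_exp.comp (by fun_prop)
  -- left piece
  have hLeq : Set.EqOn f
      (fun s : ℝ => Complex.exp (∑ i ∈ Finset.Icc 1 n, -(ζ i * (t i : ℂ)))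
        * Complex.exp (Z * s)) (Set.Iic (t 1)) := by
    intro s hs
    have habs : ∀ i ∈ Finset.Icc 1 n,
        -ζ i * ((|s - t i| : ℝ) : ℂ) = -(ζ i * (t i : ℂ)) + ζ i * (s : ℂ) := by
      intro i hi
      have hti : t 1 ≤ t i := htle 1 h1n i hi (by simp at hi; omega)
      have h1 : s ≤ t i := le_trans hs hti
      rw [abs_of_nonpos (by linarith)]
      push_cast
      ring
    calc f s = Complex.exp (∑ i ∈ Finset.Icc 1 n, -ζ i * ((|s - t i| : ℝ) : ℂ)) := by
          simp only [hf]; exact (Complex.exp_sum _ _).symm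
      _ = Complex.exp ((∑ i ∈ Finset.Icc 1 n, -(ζ i * (t i : ℂ))) + Z * s) := by
          congr 1
          rw [Finset.sum_congr rfl habs, Finset.sum_add_distrib, hZdef, Finset.sum_mul]
      _ = _ := Complex.exp_add _ _
  have hLint : MeasureTheory.IntegrableOn f (Set.Iic (t 1)) :=
    MeasureTheory.IntegrableOn.congr_fun
      ((integrableOn_cexp_Iic Z hZre (t 1)).const_mul _) hLeq.symm measurableSet_Iic
  have hins1 : Finset.Icc 1 n = insert 1 (Finset.Icc 2 n) := by
    ext x; simp only [Finset.mem_Icc, Finset.mem_insert]; omega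
  have hLval : ∫ s in Set.Iic (t 1), f s
      = (1 / Z) * ∏ i ∈ Finset.Icc 2 n, Complex.exp (-ζ i * ((t i - t 1 : ℝ) : ℂ)) := by
    rw [MeasureTheory.setIntegral_congr_fun measurableSet_Iic hLeq,
      MeasureTheory.integral_const_mul, integral_cexp_Iic Z hZre (t 1)]
    have hprod : ∏ i ∈ Finset.Icc 2 n, Complex.exp (-ζ i * ((t i - t 1 : ℝ) : ℂ))
        = Complex.exp (∑ i ∈ Finset.Icc 2 n, -ζ i * ((t i - t 1 : ℝ) : ℂ)) :=
      (Complex.exp_sum _ _).symm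
    have hexp : Complex.exp (∑ i ∈ Finset.Icc 1 n, -(ζ i * (t i : ℂ)))
        * Complex.exp (Z * ((t 1 : ℝ) : ℂ))
        = Complex.exp (∑ i ∈ Finset.Icc 2 n, -ζ i * ((t i - t 1 : ℝ) : ℂ)) := by
      rw [← Complex.exp_add]
      congr 1
      have hterm : ∀ i ∈ Finset.Icc 1 n,
          -(ζ i * (t i : ℂ)) + ζ i * ((t 1 : ℝ) : ℂ) = -ζ i * ((t i - t 1 : ℝ) : ℂ) := by
        intro i _; push_cast; ring
      calc (∑ i ∈ Finset.Icc 1 n, -(ζ i * (t i : ℂ))) + Z * ((t 1 : ℝ) : ℂ)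
          = ∑ i ∈ Finset.Icc 1 n, -ζ i * ((t i - t 1 : ℝ) : ℂ) := by
            rw [hZdef, Finset.sum_mul, ← Finset.sum_add_distrib]
            exact Finset.sum_congr rfl hterm
        _ = ∑ i ∈ Finset.Icc 2 n, -ζ i * ((t i - t 1 : ℝ) : ℂ) := by
            rw [hins1, Finset.sum_insert (by simp)]
            simp
    rw [hprod, ← hexp]
    field_simp
  -- right piece
  have hins2 : Finset.Icc 1 n = insert n (Finset.Icc 1 (n-1)) := by
    ext x; simp only [Finset.mem_Icc, Finset.mem_insert]; omega
  have hReq : Set.EqOn f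
      (fun s : ℝ => Complex.exp (∑ i ∈ Finset.Icc 1 n, ζ i * (t i : ℂ))
        * Complex.exp (-(Z * s))) (Set.Ioi (t n)) := by
    intro s hs
    have habs : ∀ i ∈ Finset.Icc 1 n,
        -ζ i * ((|s - t i| : ℝ) : ℂ) = ζ i * (t i : ℂ) + -(ζ i * (s : ℂ)) := by
      intro i hi
      have hti : t i ≤ t n := htle i hi n hnn (by simp at hi; omega)
      have h1 : t i ≤ s := le_trans hti (le_of_lt hs)
      rw [abs_of_nonneg (by linarith)]
      push_cast
      ring
    calc f s = Complex.exp (∑ i ∈ Finset.Icc 1 n, -ζ i * ((|s - t i| : ℝ) : ℂ)) := by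
          simp only [hf]; exact (Complex.exp_sum _ _).symm
      _ = Complex.exp ((∑ i ∈ Finset.Icc 1 n, ζ i * (t i : ℂ)) + -(Z * s)) := by
          congr 1
          rw [Finset.sum_congr rfl habs, Finset.sum_add_distrib, hZdef, Finset.sum_mul,
            ← Finset.sum_neg_distrib]
      _ = _ := Complex.exp_add _ _
  have hRint : MeasureTheory.IntegrableOn f (Set.Ioi (t n)) :=
    MeasureTheory.IntegrableOn.congr_fun
      ((integrableOn_cexp_Ioi Z hZre (t n)).const_mul _) hReq.symm measurableSet_Ioi
  have hRval : ∫ s in Set.Ioi (t n), f s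
      = (1 / Z) * ∏ i ∈ Finset.Icc 1 (n-1), Complex.exp (-ζ i * ((t n - t i : ℝ) : ℂ)) := by
    rw [MeasureTheory.setIntegral_congr_fun measurableSet_Ioi hReq,
      MeasureTheory.integral_const_mul, integral_cexp_Ioi Z hZre (t n)]
    have hprod : ∏ i ∈ Finset.Icc 1 (n-1), Complex.exp (-ζ i * ((t n - t i : ℝ) : ℂ))
        = Complex.exp (∑ i ∈ Finset.Icc 1 (n-1), -ζ i * ((t n - t i : ℝ) : ℂ)) :=
      (Complex.exp_sum _ _).symm
    have hexp : Complex.exp (∑ i ∈ Finset.Icc 1 n, ζ i * (t i : ℂ))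
        * Complex.exp (-(Z * ((t n : ℝ) : ℂ)))
        = Complex.exp (∑ i ∈ Finset.Icc 1 (n-1), -ζ i * ((t n - t i : ℝ) : ℂ)) := by
      rw [← Complex.exp_add]
      congr 1
      have hterm : ∀ i ∈ Finset.Icc 1 n,
          ζ i * (t i : ℂ) + -(ζ i * ((t n : ℝ) : ℂ)) = -ζ i * ((t n - t i : ℝ) : ℂ) := by
        intro i _; push_cast; ring
      calc (∑ i ∈ Finset.Icc 1 n, ζ i * (t i : ℂ)) + -(Z * ((t n : ℝ) : ℂ))
          = ∑ i ∈ Finset.Icc 1 n, -ζ i * ((t n - t i : ℝ) : ℂ) := by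
            rw [hZdef, Finset.sum_mul, ← Finset.sum_neg_distrib, ← Finset.sum_add_distrib]
            exact Finset.sum_congr rfl hterm
        _ = ∑ i ∈ Finset.Icc 1 (n-1), -ζ i * ((t n - t i : ℝ) : ℂ) := by
            rw [hins2, Finset.sum_insert (by simp only [Finset.mem_Icc]; omega)]
            simp
    rw [hprod, ← hexp]
    field_simp
  -- middle pieces
  have hM : ∀ j, 1 ≤ j → j ≤ n - 1 →
      (∫ s in (t j)..(t (j+1)), f s)
      = (∏ i ∈ Finset.Icc 1 (j - 1), Complex.exp (-ζ i * ((t j - t i : ℝ) : ℂ))) *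
          ((t (j + 1) - t j : ℝ) : ℂ) *
          (∏ i ∈ Finset.Icc (j + 2) n, Complex.exp (-ζ i * ((t i - t (j + 1) : ℝ) : ℂ))) *
          (∫ s in (0:ℝ)..1, Complex.exp
            (-(((∑ i ∈ Finset.Icc 1 j, ζ i) * (s : ℂ)
                + (∑ i ∈ Finset.Icc (j + 1) n, ζ i) * (1 - (s : ℂ)))
              * ((t (j + 1) - t j : ℝ) : ℂ)))) := by
    intro j hj1 hj2
    have hn2 : 2 ≤ n := by omega
    have hjmem : j ∈ Finset.Icc 1 n := by simp; omega
    have hj1mem : j + 1 ∈ Finset.Icc 1 n := by simp; omega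
    set A : ℂ := ∑ i ∈ Finset.Icc 1 j, ζ i with hAdef
    set B : ℂ := ∑ i ∈ Finset.Icc (j+1) n, ζ i with hBdef
    set Δ : ℝ := t (j+1) - t j with hΔdef
    have hΔ : 0 < Δ := sub_pos.mpr (ht j hjmem (j+1) hj1mem (by omega))
    have hΔ0 : Δ ≠ 0 := ne_of_gt hΔ
    have hΔC : ((Δ : ℝ) : ℂ) ≠ 0 := Complex.ofReal_ne_zero.mpr hΔ0
    set g : ℝ → ℂ := fun u : ℝ =>
      Complex.exp (-((A * (u : ℂ) + B * (1 - (u : ℂ))) * ((Δ : ℝ) : ℂ))) with hg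
    have htj1 : ((t (j+1) : ℝ) : ℂ) = ((Δ : ℝ) : ℂ) + ((t j : ℝ) : ℂ) := by
      rw [hΔdef]; push_cast; ring
    have hkey : Set.EqOn f
        (fun s : ℝ =>
          (Complex.exp (∑ i ∈ Finset.Icc 1 (j-1), -ζ i * ((t j - t i : ℝ) : ℂ))
            * Complex.exp (∑ i ∈ Finset.Icc (j+2) n, -ζ i * ((t i - t (j+1) : ℝ) : ℂ)))
          * g ((1/Δ) * s + -t j / Δ)) (Set.uIcc (t j) (t (j+1))) := by
      intro s hs
      beta_reduce
      rw [Set.uIcc_of_le (by linarith)] at hs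
      obtain ⟨hs1, hs2⟩ := hs
      have huD : (1 / Δ * s + -t j / Δ) * Δ = s - t j := by field_simp; ring
      have hgval : g ((1/Δ) * s + -t j / Δ)
          = Complex.exp (-(A * ((s - t j : ℝ) : ℂ) + B * ((t (j+1) - s : ℝ) : ℂ))) := by
        simp only [hg]
        refine congrArg Complex.exp ?_
        have h2 : ((1 / Δ * s + -t j / Δ : ℝ) : ℂ) * ((Δ : ℝ) : ℂ) = ((s - t j : ℝ) : ℂ) := by
          rw [← Complex.ofReal_mul, huD]
        calc -((A * ((1 / Δ * s + -t j / Δ : ℝ) : ℂ)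
                + B * (1 - ((1 / Δ * s + -t j / Δ : ℝ) : ℂ))) * ((Δ : ℝ) : ℂ))
            = -(A * (((1 / Δ * s + -t j / Δ : ℝ) : ℂ) * ((Δ : ℝ) : ℂ))
                + B * (((Δ : ℝ) : ℂ) - ((1 / Δ * s + -t j / Δ : ℝ) : ℂ) * ((Δ : ℝ) : ℂ))) := by
              ring
          _ = -(A * ((s - t j : ℝ) : ℂ) + B * (((Δ : ℝ) : ℂ) - ((s - t j : ℝ) : ℂ))) := by
              rw [h2]
          _ = -(A * ((s - t j : ℝ) : ℂ) + B * ((t (j+1) - s : ℝ) : ℂ)) := by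
              push_cast [htj1]; ring
      have hsplit : ∑ i ∈ Finset.Icc 1 n, -ζ i * ((|s - t i| : ℝ) : ℂ)
          = (∑ i ∈ Finset.Icc 1 j, -ζ i * ((|s - t i| : ℝ) : ℂ))
            + ∑ i ∈ Finset.Icc (j+1) n, -ζ i * ((|s - t i| : ℝ) : ℂ) := by
        rw [show Finset.Icc 1 n = Finset.Ioc 0 n from (Finset.Icc_add_one_left_eq_Ioc 0 n),
          show Finset.Icc 1 j = Finset.Ioc 0 j from (Finset.Icc_add_one_left_eq_Ioc 0 j),
          show Finset.Icc (j+1) n = Finset.Ioc j n from (Finset.Icc_add_one_left_eq_Ioc j n)]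
        exact (Finset.sum_Ioc_consecutive _ (by omega) (by omega)).symm
      have hleft : ∑ i ∈ Finset.Icc 1 j, -ζ i * ((|s - t i| : ℝ) : ℂ)
          = (∑ i ∈ Finset.Icc 1 (j-1), -ζ i * ((t j - t i : ℝ) : ℂ))
            + -(A * ((s - t j : ℝ) : ℂ)) := by
        have hterm : ∀ i ∈ Finset.Icc 1 j, -ζ i * ((|s - t i| : ℝ) : ℂ)
            = -ζ i * ((t j - t i : ℝ) : ℂ) + -(ζ i * ((s - t j : ℝ) : ℂ)) := by
          intro i hi
          simp only [Finset.mem_Icc] at hi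
          have hti : t i ≤ t j := htle i (by simp; omega) j hjmem hi.2
          rw [abs_of_nonneg (by linarith)]
          push_cast; ring
        rw [Finset.sum_congr rfl hterm, Finset.sum_add_distrib]
        congr 1
        · rw [show Finset.Icc 1 j = insert j (Finset.Icc 1 (j-1)) from by
            ext x; simp only [Finset.mem_Icc, Finset.mem_insert]; omega,
            Finset.sum_insert (by simp only [Finset.mem_Icc]; omega)]
          simp
        · rw [Finset.sum_neg_distrib, ← Finset.sum_mul, hAdef]
      have hright : ∑ i ∈ Finset.Icc (j+1) n, -ζ i * ((|s - t i| : ℝ) : ℂ)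
          = (∑ i ∈ Finset.Icc (j+2) n, -ζ i * ((t i - t (j+1) : ℝ) : ℂ))
            + -(B * ((t (j+1) - s : ℝ) : ℂ)) := by
        have hterm : ∀ i ∈ Finset.Icc (j+1) n, -ζ i * ((|s - t i| : ℝ) : ℂ)
            = -ζ i * ((t i - t (j+1) : ℝ) : ℂ) + -(ζ i * ((t (j+1) - s : ℝ) : ℂ)) := by
          intro i hi
          simp only [Finset.mem_Icc] at hi
          have hti : t (j+1) ≤ t i := htle (j+1) hj1mem i (by simp; omega) hi.1
          rw [abs_of_nonpos (by linarith)]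
          push_cast; ring
        rw [Finset.sum_congr rfl hterm, Finset.sum_add_distrib]
        congr 1
        · rw [show Finset.Icc (j+1) n = insert (j+1) (Finset.Icc (j+2) n) from by
            ext x; simp only [Finset.mem_Icc, Finset.mem_insert]; omega,
            Finset.sum_insert (by simp only [Finset.mem_Icc]; omega)]
          simp
        · rw [Finset.sum_neg_distrib, ← Finset.sum_mul, hBdef]
      calc f s = Complex.exp (∑ i ∈ Finset.Icc 1 n, -ζ i * ((|s - t i| : ℝ) : ℂ)) := by
            simp only [hf]; exact (Complex.exp_sum _ _).symm
        _ = Complex.exp ((∑ i ∈ Finset.Icc 1 (j-1), -ζ i * ((t j - t i : ℝ) : ℂ))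
              + (∑ i ∈ Finset.Icc (j+2) n, -ζ i * ((t i - t (j+1) : ℝ) : ℂ))
              + -(A * ((s - t j : ℝ) : ℂ) + B * ((t (j+1) - s : ℝ) : ℂ))) := by
            refine congrArg Complex.exp ?_
            rw [hsplit, hleft, hright]
            ring
        _ = _ := by
            rw [Complex.exp_add, Complex.exp_add, hgval]
    rw [intervalIntegral.integral_congr hkey, intervalIntegral.integral_const_mul,
      intervalIntegral.integral_comp_mul_add g (one_div_ne_zero hΔ0) (-t j / Δ),
      show (1/Δ) * (t j) + -t j / Δ = (0:ℝ) from by field_simp; ring,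
      show (1/Δ) * (t (j+1)) + -t j / Δ = (1:ℝ) from by
        have h := hΔdef; field_simp; linarith]
    rw [one_div, inv_inv, Complex.real_smul, Complex.exp_sum, Complex.exp_sum]
    ring
  -- assembly
  have ht1n : t 1 ≤ t n := htle 1 h1n n hnn hn
  have hIocInt : MeasureTheory.IntegrableOn f (Set.Ioc (t 1) (t n)) :=
    hfc.integrableOn_Ioc
  have hIoiInt : MeasureTheory.IntegrableOn f (Set.Ioi (t 1)) := by
    rw [← Set.Ioc_union_Ioi_eq_Ioi ht1n]
    exact hIocInt.union hRint
  have hsplit1 : ∫ s : ℝ, f s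
      = (∫ s in Set.Iic (t 1), f s) + ∫ s in Set.Ioi (t 1), f s :=
    (intervalIntegral.integral_Iic_add_Ioi hLint hIoiInt).symm
  have hsplit2 : ∫ s in Set.Ioi (t 1), f s
      = (∫ s in Set.Ioc (t 1) (t n), f s) + ∫ s in Set.Ioi (t n), f s := by
    rw [← Set.Ioc_union_Ioi_eq_Ioi ht1n]
    refine MeasureTheory.setIntegral_union ?_ measurableSet_Ioi hIocInt hRint
    rw [Set.disjoint_left]
    intro x hx1 hx2
    exact absurd (Set.mem_Ioi.mp hx2) (not_lt.mpr hx1.2)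
  have hIocEq : ∫ s in Set.Ioc (t 1) (t n), f s = ∫ s in (t 1)..(t n), f s :=
    (intervalIntegral.integral_of_le ht1n).symm
  have htel := intervalIntegral.sum_integral_adjacent_intervals
    (a := fun k => t (k+1)) (n := n - 1) (μ := MeasureTheory.volume)
    (fun k _ => hfc.intervalIntegrable _ _)
  simp only [Nat.sub_add_cancel hn] at htel
  have hmids : ∑ k ∈ Finset.range (n-1), (∫ s in (t (k+1))..(t (k+1+1)), f s)
      = ∑ j ∈ Finset.Icc 1 (n - 1),
        (∏ i ∈ Finset.Icc 1 (j - 1), Complex.exp (-ζ i * ((t j - t i : ℝ) : ℂ))) *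
          ((t (j + 1) - t j : ℝ) : ℂ) *
          (∏ i ∈ Finset.Icc (j + 2) n, Complex.exp (-ζ i * ((t i - t (j + 1) : ℝ) : ℂ))) *
          (∫ s in (0:ℝ)..1, Complex.exp
            (-(((∑ i ∈ Finset.Icc 1 j, ζ i) * (s : ℂ)
                + (∑ i ∈ Finset.Icc (j + 1) n, ζ i) * (1 - (s : ℂ)))
              * ((t (j + 1) - t j : ℝ) : ℂ)))) := by
    rw [show Finset.Icc 1 (n-1) = Finset.Ico 1 n from by
      ext x; simp only [Finset.mem_Icc, Finset.mem_Ico]; omega,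
      Finset.sum_Ico_eq_sum_range]
    refine Finset.sum_congr rfl fun k hk => ?_
    have hk' := Finset.mem_range.mp hk
    rw [show 1 + k = k + 1 from Nat.add_comm 1 k]
    exact hM (k+1) (by omega) (by omega)
  rw [hsplit1, hsplit2, hIocEq, ← htel, hLval, hRval, hmids]
  ring
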